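/- Let p be a polynomial with real coefficients of degree 8, with coefficients c_i, such that c_0 > 0, p is palindromic (c_i = c_{8-i} for all 0 ≤ i ≤ 8), and the coefficients of p alternate in sign ((-1)^i · c_i ≥ 0 for every i ≥ 0). If at least four of the complex roots of p, counted with multiplicity, lie on the unit circle, and p has a complex root z with Re z ≤ -1, then -c_7/c_8 < 2. -/

import Mathlib

open Polynomial

/-- A real polynomial of degree `8` with positive constant term, palindromic
coefficients (`cᵢ = c_{8-i}`) and coefficients alternating in sign, having at
least four complex roots (counted with multiplicity) on the unit circle and a
complex root `z` with `Re z ≤ -1`, satisfies `-c₇/c₈ < 2`. -/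
theorem stmt_5 (p : Polynomial ℝ)
    (hdeg : p.natDegree = 8)
    (h0 : 0 < p.coeff 0)
    (hpal : ∀ i ≤ 8, p.coeff i = p.coeff (8 - i))
    (halt : ∀ i : ℕ, 0 ≤ (-1 : ℝ) ^ i * p.coeff i)
    (hcirc : 4 ≤
      ((p.map (algebraMap ℝ ℂ)).roots.filter fun z => ‖z‖ = 1).card)
    (z : ℂ) (hz : Polynomial.aeval z p = 0) (hre : z.re ≤ -1) :
    -(p.coeff 7) / p.coeff 8 < 2 := by
  have h08 : p.coeff 0 = p.coeff 8 := by simpa using hpal 0 (by norm_num)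
  have h17 : p.coeff 1 = p.coeff 7 := by simpa using hpal 1 (by norm_num)
  have h26 : p.coeff 2 = p.coeff 6 := by simpa using hpal 2 (by norm_num)
  have h35 : p.coeff 3 = p.coeff 5 := by simpa using hpal 3 (by norm_num)
  have hc8 : 0 < p.coeff 8 := h08 ▸ h0
  set P : Polynomial ℂ := p.map (algebraMap ℝ ℂ) with hPdef
  have hc8C : ((p.coeff 8 : ℂ)) ≠ 0 := by exact_mod_cast hc8.ne'
  have hPdeg : P.natDegree = 8 := by rw [hPdef, natDegree_map, hdeg]
  have hcoeff : ∀ i, P.coeff i = (p.coeff i : ℂ) := fun i => by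
    simp [hPdef, coeff_map]
  have hP0 : P ≠ 0 := fun h => by
    have := hcoeff 8; rw [h] at this; simp at this; exact hc8C this.symm
  -- evaluation as explicit sum
  have hev : ∀ w : ℂ, P.eval w = ∑ i ∈ Finset.range 9, (p.coeff i : ℂ) * w ^ i := by
    intro w
    rw [eval_eq_sum_range' (by omega : P.natDegree < 9)]
    exact Finset.sum_congr rfl fun i _ => by rw [hcoeff]
  -- z is a root of P
  have hz' : P.eval z = 0 := by
    rw [hPdef, eval_map, ← aeval_def, hz]
  -- no nonpositive real roots
  have hnoreal : ∀ t : ℝ, t ≤ 0 → 0 < p.eval t := by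
    intro t ht
    rw [eval_eq_sum_range' (by omega : p.natDegree < 9)]
    apply Finset.sum_pos'
    · intro i _
      have h1 : ((-1 : ℝ)) ^ i * (-1 : ℝ) ^ i = 1 := by
        rw [← mul_pow]; norm_num
      have : p.coeff i * t ^ i = ((-1) ^ i * p.coeff i) * (-t) ^ i := by
        calc p.coeff i * t ^ i = (((-1 : ℝ)) ^ i * (-1 : ℝ) ^ i) * (p.coeff i * t ^ i) := by
              rw [h1, one_mul]
          _ = ((-1) ^ i * p.coeff i) * (-t) ^ i := by rw [neg_pow t]; ring
      rw [this]
      exact mul_nonneg (halt i) (pow_nonneg (by linarith) i)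
    · exact ⟨0, by simp, by simpa using h0⟩
  -- z is not real
  have hzim : z.im ≠ 0 := by
    intro h
    have hze : z = ((z.re : ℝ) : ℂ) := Complex.ext rfl (by simp [h])
    have h1 : P.eval ((z.re : ℝ) : ℂ) = ((p.eval z.re : ℝ) : ℂ) := by
      rw [hPdef, eval_map]
      exact eval₂_at_apply (algebraMap ℝ ℂ) z.re
    rw [hze, h1] at hz'
    have : p.eval z.re = 0 := by exact_mod_cast hz'
    have := hnoreal z.re (by linarith)
    linarith
  have hz0 : z ≠ 0 := fun h => by rw [h] at hre; simp at hre; linarith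
  have hns : 1 < Complex.normSq z := by
    rw [Complex.normSq_apply]
    have h1 : 1 ≤ z.re * z.re := by nlinarith
    have h2 : 0 < z.im * z.im := mul_self_pos.mpr hzim
    linarith
  have habz : 1 < ‖z‖ := by
    nlinarith [Complex.sq_norm z, norm_nonneg z]
  -- conjugate roots
  have hconj : ∀ w : ℂ, P.eval w = 0 → P.eval ((starRingEnd ℂ) w) = 0 := by
    intro w hw
    rw [hev] at hw ⊢
    have : ∑ i ∈ Finset.range 9, ((p.coeff i : ℂ)) * ((starRingEnd ℂ) w) ^ i
        = (starRingEnd ℂ) (∑ i ∈ Finset.range 9, (p.coeff i : ℂ) * w ^ i) := by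
      rw [map_sum]
      exact Finset.sum_congr rfl fun i _ => by
        rw [map_mul, map_pow, Complex.conj_ofReal]
    rw [this, hw, map_zero]
  -- reciprocal root
  have H08 : ((p.coeff 0 : ℂ)) = (p.coeff 8 : ℂ) := by exact_mod_cast h08
  have H17 : ((p.coeff 1 : ℂ)) = (p.coeff 7 : ℂ) := by exact_mod_cast h17
  have H26 : ((p.coeff 2 : ℂ)) = (p.coeff 6 : ℂ) := by exact_mod_cast h26
  have H35 : ((p.coeff 3 : ℂ)) = (p.coeff 5 : ℂ) := by exact_mod_cast h35
  have hinv : P.eval z⁻¹ = 0 := by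
    have hinvsum : P.eval z⁻¹ * z ^ 8 = ∑ i ∈ Finset.range 9, (p.coeff i : ℂ) * z ^ (8 - i) := by
      rw [hev, Finset.sum_mul]
      refine Finset.sum_congr rfl fun i hi => ?_
      rw [Finset.mem_range] at hi
      have hpow : (z⁻¹) ^ i * z ^ 8 = z ^ (8 - i) := by
        rw [inv_pow, inv_mul_eq_iff_eq_mul₀ (pow_ne_zero _ hz0), ← pow_add]
        congr 1
        omega
      rw [mul_assoc, hpow]
    have key : P.eval z⁻¹ * z ^ 8 = P.eval z := by
      rw [hinvsum, hev]
      simp only [Finset.sum_range_succ, Finset.sum_range_zero, H08, H17, H26, H35]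
      norm_num
      ring
    rw [hz'] at key
    have h8 : z ^ 8 ≠ 0 := pow_ne_zero _ hz0
    exact (mul_eq_zero.mp key).resolve_right h8
  -- the four off-circle roots
  have hmem : ∀ w : ℂ, P.eval w = 0 → w ∈ P.roots := fun w h =>
    (mem_roots hP0).mpr h
  have hzc : P.eval ((starRingEnd ℂ) z) = 0 := hconj z hz'
  have hzic : P.eval (((starRingEnd ℂ) z)⁻¹) = 0 := by
    have := hconj _ hinv
    rwa [map_inv₀] at this
  -- abs values
  have habconj : ‖(starRingEnd ℂ) z‖ = ‖z‖ := Complex.norm_conj z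
  have habinv : ‖z⁻¹‖ = ‖z‖⁻¹ := norm_inv z
  have habinv' : ‖((starRingEnd ℂ) z)⁻¹‖ = ‖z‖⁻¹ := by
    rw [norm_inv, habconj]
  have hinvlt : ‖z‖⁻¹ < 1 := by
    rw [inv_lt_one_iff₀]; right; exact habz
  have habne1 : ‖z‖ ≠ 1 := ne_of_gt habz
  have habinvne1 : ‖z‖⁻¹ ≠ 1 := ne_of_lt hinvlt
  -- the multiset of four roots
  set m : Multiset ℂ := {z, (starRingEnd ℂ) z, z⁻¹, ((starRingEnd ℂ) z)⁻¹} with hm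
  have hnzconj : z ≠ (starRingEnd ℂ) z := fun h => hzim (Complex.conj_eq_iff_im.mp h.symm)
  have hab1 : z ≠ z⁻¹ := fun h => by
    have := congrArg (‖·‖) h; rw [habinv] at this; linarith
  have hab2 : z ≠ ((starRingEnd ℂ) z)⁻¹ := fun h => by
    have := congrArg (‖·‖) h; rw [habinv'] at this; linarith
  have hab3 : (starRingEnd ℂ) z ≠ z⁻¹ := fun h => by
    have := congrArg (‖·‖) h; rw [habconj, habinv] at this; linarith
  have hab4 : (starRingEnd ℂ) z ≠ ((starRingEnd ℂ) z)⁻¹ := fun h => by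
    have := congrArg (‖·‖) h; rw [habconj, habinv'] at this; linarith
  have hab5 : z⁻¹ ≠ ((starRingEnd ℂ) z)⁻¹ := fun h => hnzconj (inv_injective h)
  have hmnodup : m.Nodup := by
    rw [hm]
    simp only [Multiset.insert_eq_cons, Multiset.nodup_cons, Multiset.mem_cons,
      Multiset.mem_singleton, Multiset.nodup_singleton, and_true, not_or]
    tauto
  -- decomposition of the root multiset
  have hsplit : P.Splits := IsAlgClosed.splits P
  have hcard : Multiset.card P.roots = 8 := by
    rw [splits_iff_card_roots.mp hsplit, hPdeg]
  set T := P.roots.filter (fun w => ‖w‖ = 1) with hT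
  set T' := P.roots.filter (fun w => ¬ ‖w‖ = 1) with hT'
  have hTT' : T + T' = P.roots := Multiset.filter_add_not _ _
  have hcardsum : Multiset.card T + Multiset.card T' = 8 := by
    rw [← Multiset.card_add, hTT', hcard]
  have hT4 : 4 ≤ Multiset.card T := hcirc
  have hmsub : m ≤ T' := by
    rw [Multiset.le_iff_subset hmnodup]
    intro w hw
    rw [hT', Multiset.mem_filter]
    rw [hm] at hw
    simp only [Multiset.insert_eq_cons, Multiset.mem_cons, Multiset.mem_singleton] at hw
    rcases hw with h | h | h | h <;> subst h
    · exact ⟨hmem _ hz', habne1⟩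
    · exact ⟨hmem _ hzc, by rw [habconj]; exact habne1⟩
    · exact ⟨hmem _ hinv, by rw [habinv]; exact habinvne1⟩
    · exact ⟨hmem _ hzic, by rw [habinv']; exact habinvne1⟩
  have hmcard : Multiset.card m = 4 := by rw [hm]; rfl
  have hmeq : m = T' := Multiset.eq_of_le_of_card_le hmsub (by omega)
  have hTcard : Multiset.card T = 4 := by
    have := hmeq ▸ hmcard
    omega
  -- bound the real part of the sum over T
  have hTre : (T.sum).re ≤ 4 := by
    have hgen : ∀ s : Multiset ℂ, (∀ w ∈ s, ‖w‖ = 1) →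
        (s.sum).re ≤ (Multiset.card s : ℝ) := by
      intro s
      induction s using Multiset.induction with
      | empty => simp
      | cons a s ih =>
        intro h
        simp only [Multiset.sum_cons, Complex.add_re, Multiset.card_cons]
        have ha : a.re ≤ 1 := by
          calc a.re ≤ ‖a‖ := Complex.re_le_norm a
            _ = 1 := h a (Multiset.mem_cons_self a s)
        have hs := ih fun w hw => h w (Multiset.mem_cons_of_mem hw)
        push_cast
        linarith
    have := hgen T fun w hw => (Multiset.mem_filter.mp hw).2
    rw [hTcard] at this
    exact le_trans this (by norm_num)
  -- sum of all roots
  have hq : P.roots.sum = -((p.coeff 7 : ℂ) * (p.coeff 8 : ℂ)⁻¹) := by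
    have hlead : P.leadingCoeff = (p.coeff 8 : ℂ) := by
      rw [Polynomial.leadingCoeff, hPdeg, hcoeff]
    have hlne : P.leadingCoeff⁻¹ ≠ 0 := by rw [hlead]; exact inv_ne_zero hc8C
    set q := P * C (P.leadingCoeff)⁻¹ with hqdef
    have hqm : q.Monic := monic_mul_leadingCoeff_inv hP0
    have hqroots : q.roots = P.roots := by
      rw [hqdef, mul_comm, roots_C_mul _ hlne]
    have hqdeg : q.natDegree = 8 := by
      rw [hqdef, natDegree_mul_C hlne, hPdeg]
    have hqs := (IsAlgClosed.splits q).nextCoeff_eq_neg_sum_roots_of_monic hqm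
    have hnext : q.nextCoeff = (p.coeff 7 : ℂ) * (p.coeff 8 : ℂ)⁻¹ := by
      rw [nextCoeff_of_natDegree_pos (by omega : 0 < q.natDegree), hqdeg]
      norm_num
      rw [hqdef, coeff_mul_C, hcoeff, hlead]
    rw [hqroots, hnext] at hqs
    linear_combination hqs
  -- real part of the sum of the four off-circle roots
  have hconjinv : ((starRingEnd ℂ) z)⁻¹ = (starRingEnd ℂ) z⁻¹ := (map_inv₀ _ _).symm
  have hmre : (m.sum).re = 2 * z.re + 2 * (z⁻¹).re := by
    rw [hm, hconjinv]
    simp only [Multiset.insert_eq_cons, Multiset.sum_cons, Multiset.sum_singleton,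
      Complex.add_re, Complex.conj_re]
    ring
  have hinvre : (z⁻¹).re < 0 := by
    rw [Complex.inv_re]
    apply div_neg_of_neg_of_pos
    · linarith
    · linarith
  have hsum : P.roots.sum = T.sum + m.sum := by
    rw [← hTT', hmeq, Multiset.sum_add]
  have hfin : (P.roots.sum).re < 2 := by
    rw [hsum, Complex.add_re, hmre]
    linarith
  rw [hq] at hfin
  have hcast : (-((p.coeff 7 : ℂ) * (p.coeff 8 : ℂ)⁻¹))
      = (((-(p.coeff 7) / p.coeff 8 : ℝ)) : ℂ) := by
    push_cast
    ring
  rw [hcast, Complex.ofReal_re] at hfin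
  exact hfin
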